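/- For every subset A ⊆ {1,…,2n}, the rank of A in the Catalan matroid C_n equals n + ⌊minht_A / 2⌋. -/
import Mathlib

/-- Height of the path with up-step set `A` after `x` steps: `2·|A ∩ {1,…,x}| − x`. -/
def ht (A : Finset ℕ) (x : ℕ) : ℤ := 2 * (A ∩ Finset.Icc 1 x).card - x

/-- `P` is the up-step set of a Dyck path of length `2n`. -/
def IsDyck (n : ℕ) (P : Finset ℕ) : Prop :=
  P ⊆ Finset.Icc 1 (2 * n) ∧ P.card = n ∧ ∀ x ≤ 2 * n, 0 ≤ ht P x

/-- Minimum height of the path `A` over `0 ≤ x ≤ 2n`. -/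
def minht (n : ℕ) (A : Finset ℕ) : ℤ :=
  ((Finset.range (2 * n + 1)).image (ht A)).min' (by simp)

namespace CatalanAux

lemma ht_zero (A : Finset ℕ) : ht A 0 = 0 := by simp [ht]

lemma Icc_succ (y : ℕ) : Finset.Icc 1 (y + 1) = insert (y + 1) (Finset.Icc 1 y) := by
  ext z; simp [Finset.mem_Icc]; omega

lemma ht_succ (A : Finset ℕ) (y : ℕ) :
    ht A (y + 1) = ht A y + (if y + 1 ∈ A then 1 else -1) := by
  by_cases hy : y + 1 ∈ A
  · have h : A ∩ Finset.Icc 1 (y + 1) = insert (y + 1) (A ∩ Finset.Icc 1 y) := by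
      rw [Icc_succ, Finset.inter_insert_of_mem hy]
    have hnm : y + 1 ∉ A ∩ Finset.Icc 1 y := by simp [Finset.mem_Icc]
    rw [ht, ht, h, Finset.card_insert_of_notMem hnm, if_pos hy]
    push_cast; ring
  · have h : A ∩ Finset.Icc 1 (y + 1) = A ∩ Finset.Icc 1 y := by
      rw [Icc_succ, Finset.inter_insert_of_notMem hy]
    rw [ht, ht, h, if_neg hy]
    push_cast; ring

/-- Prefix minimum of heights. -/
def pmin (A : Finset ℕ) (y : ℕ) : ℤ :=
  ((Finset.range (y + 1)).image (ht A)).min' (by simp)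

lemma minht_eq (n : ℕ) (A : Finset ℕ) : minht n A = pmin A (2 * n) := rfl

lemma pmin_le (A : Finset ℕ) {w y : ℕ} (h : w ≤ y) : pmin A y ≤ ht A w := by
  apply Finset.min'_le
  exact Finset.mem_image_of_mem _ (by simp; omega)

lemma exists_pmin (A : Finset ℕ) (y : ℕ) : ∃ w ≤ y, ht A w = pmin A y := by
  have := Finset.min'_mem ((Finset.range (y + 1)).image (ht A)) (by simp)
  simp only [Finset.mem_image, Finset.mem_range] at this
  obtain ⟨w, hw, he⟩ := this
  exact ⟨w, by omega, he⟩

lemma pmin_zero (A : Finset ℕ) : pmin A 0 = 0 := by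
  simp [pmin, ht_zero]

lemma pmin_succ (A : Finset ℕ) (y : ℕ) :
    pmin A (y + 1) = min (pmin A y) (ht A (y + 1)) := by
  apply le_antisymm
  · apply le_min
    · obtain ⟨w, hw, he⟩ := exists_pmin A y
      exact he ▸ pmin_le A (by omega)
    · exact pmin_le A (le_refl _)
  · obtain ⟨w, hw, he⟩ := exists_pmin A (y + 1)
    rw [← he]
    rcases Nat.lt_or_ge w (y + 1) with h | h
    · exact le_trans (min_le_left _ _) (pmin_le A (by omega))
    · have : w = y + 1 := by omega
      rw [this]
      exact min_le_right _ _

lemma pmin_nonpos (A : Finset ℕ) (y : ℕ) : pmin A y ≤ 0 := by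
  have := pmin_le A (Nat.zero_le y)
  rwa [ht_zero] at this

/-- The padding condition: position `z` is a down-step reaching a new strict minimum
of odd height. -/
def cond (A : Finset ℕ) (z : ℕ) : Prop :=
  ht A z % 2 = 1 ∧ ∀ w < z, ht A z < ht A w

instance (A : Finset ℕ) : DecidablePred (cond A) := fun _ =>
  instDecidableAnd

/-- Number of padding positions up to `y`. -/
def q (A : Finset ℕ) (y : ℕ) : ℕ :=
  ((Finset.Icc 1 y).filter (cond A)).card

lemma q_eq (A : Finset ℕ) : ∀ y, (q A y : ℤ) = (1 - pmin A y) / 2 := by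
  intro y
  induction y with
  | zero => simp [q, pmin_zero]
  | succ y ih =>
    have hq : q A (y + 1) = q A y + (if cond A (y + 1) then 1 else 0) := by
      unfold q
      rw [Icc_succ, Finset.filter_insert]
      split
      · rw [Finset.card_insert_of_notMem (by simp [Finset.mem_Icc])]
      · simp
    have hstep := ht_succ A y
    have hply : pmin A y ≤ ht A y := pmin_le A (le_refl y)
    have hps := pmin_succ A y
    by_cases hlt : ht A (y + 1) < pmin A y
    · -- new strict minimum
      have hval : ht A (y + 1) = pmin A y - 1 := by
        by_cases hy : y + 1 ∈ A <;> simp [hy] at hstep <;> omega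
      have hcondall : ∀ w < y + 1, ht A (y + 1) < ht A w := by
        intro w hw
        have := pmin_le A (show w ≤ y by omega)
        omega
      have hcond : cond A (y + 1) ↔ (pmin A y - 1) % 2 = 1 := by
        unfold cond
        rw [hval]
        exact ⟨fun h => h.1, fun h => ⟨h, by rw [← hval]; exact hcondall⟩⟩
      have hpm : pmin A (y + 1) = pmin A y - 1 := by rw [hps, hval]; omega
      rw [hq, hpm]
      by_cases hpar : (pmin A y - 1) % 2 = 1
      · rw [if_pos (hcond.mpr hpar)]; push_cast; omega
      · rw [if_neg (fun h => hpar (hcond.mp h))]; push_cast; omega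
    · -- no new minimum
      have hcond : ¬ cond A (y + 1) := by
        obtain ⟨w, hw, he⟩ := exists_pmin A y
        intro h
        have := h.2 w (by omega)
        omega
      have hpm : pmin A (y + 1) = pmin A y := by rw [hps]; omega
      rw [hq, hpm, if_neg hcond]
      push_cast; omega

/-- The padding set. -/
def padSet (n : ℕ) (A : Finset ℕ) : Finset ℕ :=
  (Finset.Icc 1 (2 * n)).filter (cond A)

lemma padSet_disjoint (n : ℕ) (A : Finset ℕ) : Disjoint A (padSet n A) := by
  rw [Finset.disjoint_right]
  intro z hz hzA
  simp only [padSet, Finset.mem_filter, Finset.mem_Icc] at hz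
  obtain ⟨⟨h1, _⟩, _, hlt⟩ := hz
  have hz1 : z - 1 < z := by omega
  have := hlt (z - 1) hz1
  have hstep := ht_succ A (z - 1)
  rw [Nat.sub_add_cancel h1] at hstep
  rw [if_pos hzA] at hstep
  omega

lemma padSet_inter (n : ℕ) (A : Finset ℕ) {y : ℕ} (hy : y ≤ 2 * n) :
    padSet n A ∩ Finset.Icc 1 y = (Finset.Icc 1 y).filter (cond A) := by
  ext z
  simp only [padSet, Finset.mem_inter, Finset.mem_filter, Finset.mem_Icc]
  constructor
  · rintro ⟨⟨_, hc⟩, h1, h2⟩; exact ⟨⟨h1, h2⟩, hc⟩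
  · rintro ⟨⟨h1, h2⟩, hc⟩; exact ⟨⟨⟨h1, by omega⟩, hc⟩, h1, h2⟩

lemma ht_union (n : ℕ) (A : Finset ℕ) {y : ℕ} (hy : y ≤ 2 * n) :
    ht (A ∪ padSet n A) y = ht A y + 2 * q A y := by
  have hdistrib : (A ∪ padSet n A) ∩ Finset.Icc 1 y
      = (A ∩ Finset.Icc 1 y) ∪ (padSet n A ∩ Finset.Icc 1 y) := by
    rw [Finset.union_inter_distrib_right]
  have hdisj : Disjoint (A ∩ Finset.Icc 1 y) (padSet n A ∩ Finset.Icc 1 y) :=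
    Finset.disjoint_of_subset_left Finset.inter_subset_left
      (Finset.disjoint_of_subset_right Finset.inter_subset_left (padSet_disjoint n A))
  rw [ht, ht, hdistrib, Finset.card_union_of_disjoint hdisj, padSet_inter n A hy]
  show (2 : ℤ) * (((A ∩ Finset.Icc 1 y).card : ℤ) + (q A y : ℤ)) - y = _
  ring

lemma ht_union_nonneg (n : ℕ) (A : Finset ℕ) {y : ℕ} (hy : y ≤ 2 * n) :
    0 ≤ ht (A ∪ padSet n A) y := by
  rw [ht_union n A hy, q_eq]
  have h1 : pmin A y ≤ ht A y := pmin_le A (le_refl y)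
  omega

/-- Removing surplus largest elements of a nonnegative path yields a Dyck path. -/
lemma removal (n : ℕ) : ∀ (t : ℕ) (C : Finset ℕ), C ⊆ Finset.Icc 1 (2 * n) →
    (∀ y ≤ 2 * n, 0 ≤ ht C y) → C.card = n + t → ∃ B ⊆ C, IsDyck n B := by
  intro t
  induction t with
  | zero =>
    intro C hsub hht hcard
    exact ⟨C, le_refl C, hsub, hcard, hht⟩
  | succ t ih =>
    intro C hsub hht hcard
    have hne : C.Nonempty := Finset.card_pos.mp (by omega)
    set M := C.max' hne with hM
    have hMmem : M ∈ C := C.max'_mem hne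
    have hMIcc := hsub hMmem
    simp only [Finset.mem_Icc] at hMIcc
    have hCfull : C ∩ Finset.Icc 1 (2 * n) = C := Finset.inter_eq_left.mpr hsub
    set C' := C.erase M with hC'
    have hsub' : C' ⊆ C := Finset.erase_subset M C
    have hcard' : C'.card = n + t := by
      rw [hC', Finset.card_erase_of_mem hMmem]; omega
    have hht' : ∀ y ≤ 2 * n, 0 ≤ ht C' y := by
      intro y hy
      by_cases hyM : y < M
      · have : C' ∩ Finset.Icc 1 y = C ∩ Finset.Icc 1 y := by
          ext z
          simp only [hC', Finset.mem_inter, Finset.mem_erase, Finset.mem_Icc]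
          constructor
          · rintro ⟨⟨_, h⟩, h2⟩; exact ⟨h, h2⟩
          · rintro ⟨h, h2⟩; exact ⟨⟨by omega, h⟩, h2⟩
        rw [ht, this]; exact hht y hy
      · -- M ≤ y : everything of C is ≤ y
        have hCy : C ∩ Finset.Icc 1 y = C := by
          apply Finset.inter_eq_left.mpr
          intro z hz
          have h1 := hsub hz
          simp only [Finset.mem_Icc] at h1 ⊢
          have := C.le_max' z hz
          omega
        have hC'y : C' ∩ Finset.Icc 1 y = C' := by
          apply Finset.inter_eq_left.mpr
          intro z hz
          have h1 := hsub (hsub' hz)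
          simp only [Finset.mem_Icc] at h1 ⊢
          have h2 := C.le_max' z (hsub' hz)
          omega
        rw [ht, hC'y, hcard']
        have : (y : ℤ) ≤ 2 * n := by exact_mod_cast hy
        push_cast; omega
    obtain ⟨B, hBsub, hBD⟩ := ih C' (hsub'.trans hsub) hht' hcard'
    exact ⟨B, hBsub.trans hsub', hBD⟩

lemma upper_bound (n : ℕ) (A : Finset ℕ) {x₀ : ℕ} (hx₀ : x₀ ≤ 2 * n)
    {B : Finset ℕ} (hB : IsDyck n B) :
    ((A ∩ B).card : ℤ) ≤ ↑n + ht A x₀ / 2 := by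
  obtain ⟨hBsub, hBcard, hBht⟩ := hB
  have hsplit : A ∩ B ⊆ (A ∩ Finset.Icc 1 x₀) ∪ (B \ Finset.Icc 1 x₀) := by
    intro z hz
    simp only [Finset.mem_inter] at hz
    simp only [Finset.mem_union, Finset.mem_inter, Finset.mem_sdiff]
    by_cases h : z ∈ Finset.Icc 1 x₀
    · exact Or.inl ⟨hz.1, h⟩
    · exact Or.inr ⟨hz.2, h⟩
  have h1 : (A ∩ B).card ≤ (A ∩ Finset.Icc 1 x₀).card + (B \ Finset.Icc 1 x₀).card :=
    le_trans (Finset.card_le_card hsplit) (Finset.card_union_le _ _)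
  have h2 : (B \ Finset.Icc 1 x₀).card + (B ∩ Finset.Icc 1 x₀).card = B.card :=
    Finset.card_sdiff_add_card_inter B (Finset.Icc 1 x₀)
  have h3 := hBht x₀ hx₀
  rw [ht] at h3
  have h4 : ht A x₀ = 2 * ((A ∩ Finset.Icc 1 x₀).card : ℤ) - x₀ := rfl
  omega

end CatalanAux

open CatalanAux in
/-- The rank of `A` in the Catalan matroid, i.e. the maximum of `|A ∩ B|` over bases
(Dyck paths) `B`, equals `n + ⌊minht_A / 2⌋`. -/
theorem catalan_rank (n : ℕ) (hn : 0 < n) (A : Finset ℕ) (hA : A ⊆ Finset.Icc 1 (2 * n)) :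
    IsGreatest {m : ℤ | ∃ B : Finset ℕ, IsDyck n B ∧ ((A ∩ B).card : ℤ) = m}
      (n + minht n A / 2) := by
  set m := minht n A with hm
  obtain ⟨x₀, hx₀le, hx₀⟩ := exists_pmin A (2 * n)
  rw [← minht_eq] at hx₀
  -- upper bound for every Dyck path
  have hub : ∀ B : Finset ℕ, IsDyck n B → ((A ∩ B).card : ℤ) ≤ ↑n + m / 2 := by
    intro B hB
    have := upper_bound n A hx₀le hB
    rw [hx₀] at this
    exact this
  -- construction
  have hAcard : m ≤ 2 * (A.card : ℤ) - 2 * n := by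
    have h := pmin_le A (le_refl (2 * n))
    rw [← minht_eq, ← hm] at h
    rw [ht, Finset.inter_eq_left.mpr hA] at h
    push_cast at h
    omega
  set C := A ∪ padSet n A with hC
  have hCsub : C ⊆ Finset.Icc 1 (2 * n) := by
    apply Finset.union_subset hA
    exact Finset.filter_subset _ _
  have hCcard : (C.card : ℤ) = A.card + (1 - m) / 2 := by
    rw [hC, Finset.card_union_of_disjoint (padSet_disjoint n A)]
    have : (padSet n A).card = q A (2 * n) := rfl
    rw [this]
    push_cast [q_eq A (2 * n), ← minht_eq, ← hm]
    ring
  have hmle : m ≤ 0 := by rw [hm, minht_eq]; exact pmin_nonpos A (2 * n)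
  have hCn : n ≤ C.card := by omega
  obtain ⟨B, hBsub, hBD⟩ := removal n (C.card - n) C hCsub
    (fun y hy => ht_union_nonneg n A hy) (by omega)
  have hlow : (A.card : ℤ) - (A ∩ B).card ≤ C.card - n := by
    have hsub : A \ B ⊆ C \ B := Finset.sdiff_subset_sdiff Finset.subset_union_left (le_refl B)
    have h1 := Finset.card_le_card hsub
    have h2 : (A \ B).card + (A ∩ B).card = A.card := Finset.card_sdiff_add_card_inter A B
    have h3 : (C \ B).card = C.card - B.card := Finset.card_sdiff_of_subset hBsub
    have h4 : B.card ≤ C.card := Finset.card_le_card hBsub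
    have h5 : B.card = n := hBD.2.1
    omega
  refine ⟨⟨B, hBD, ?_⟩, ?_⟩
  · have := hub B hBD
    omega
  · rintro b ⟨B', hB', rfl⟩
    exact hub B' hB'
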